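/- Let t > 1/2 and let N ≥ 1 be an integer. Then ∑_{k=1}^{6} ∑_{n=N+1}^{∞} ( sup_{|z| ≤ 1} |φ_{k,n}′(z)| )^t ≤ 6 · 4^t · N^{1−2t}/(2t − 1). -/

import Mathlib

open Complex

/-- The Möbius map `f(z) = ((√3 − 1)z + 1)/(−z + √3 + 1)`. -/
noncomputable def apollonianF (z : ℂ) : ℂ :=
  ((Real.sqrt 3 - 1) * z + 1) / (-z + Real.sqrt 3 + 1)

/-- The rotation `R_θ(z) = e^{iθ} z`. -/
noncomputable def rot (θ : ℝ) (z : ℂ) : ℂ := Complex.exp (θ * I) * z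

/-- The angle `θ_k = (−1)^k · 2π/3`. -/
noncomputable def apollonianTheta (k : ℕ) : ℝ := (-1) ^ k * (2 * Real.pi / 3)

/-- The angle `θ'_k = 2πk/3`. -/
noncomputable def apollonianTheta' (k : ℕ) : ℝ := 2 * Real.pi * k / 3

/-- The Apollonian generator `φ_{k,n} = R_{θ'_k} ∘ f^n ∘ R_{θ_k} ∘ f`. -/
noncomputable def apollonianPhi (k n : ℕ) (z : ℂ) : ℂ :=
  rot (apollonianTheta' k) (apollonianF^[n] (rot (apollonianTheta k) (apollonianF z)))

noncomputable def apg (n : ℕ) (w : ℂ) : ℂ :=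
  (((Real.sqrt 3 : ℂ) - n) * w + n) / (-(n:ℂ) * w + Real.sqrt 3 + n)

lemma s3c : (Real.sqrt 3 : ℂ) * (Real.sqrt 3 : ℂ) = 3 := by
  rw [← Complex.ofReal_mul, Real.mul_self_sqrt (by norm_num : (0:ℝ) ≤ 3)]
  norm_num

lemma s3ne : (Real.sqrt 3 : ℂ) ≠ 0 :=
  Complex.ofReal_ne_zero.mpr (ne_of_gt (Real.sqrt_pos.mpr (by norm_num)))

lemma ddd (a c b : ℂ) (hb : b ≠ 0) : (a/b)/(c/b) = a/c := by
  rw [div_div_div_eq, mul_comm a b, mul_div_mul_left _ _ hb]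

lemma iterEq (n : ℕ) (w : ℂ) (h : ∀ m : ℕ, m < n → (-(m:ℂ) * w + Real.sqrt 3 + m) ≠ 0) :
    apollonianF^[n] w = apg n w := by
  induction n with
  | zero => simp [apg, mul_comm, mul_div_assoc, div_self s3ne]
  | succ n ih =>
    have hQ : (-(n:ℂ) * w + Real.sqrt 3 + n) ≠ 0 := h n (by omega)
    rw [Function.iterate_succ_apply', ih (fun m hm => h m (by omega)), apollonianF, apg, apg]
    set P : ℂ := ((Real.sqrt 3 : ℂ) - n) * w + n with hP
    set Q : ℂ := -(n:ℂ) * w + Real.sqrt 3 + n with hQdef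
    have h1 : ((Real.sqrt 3:ℂ) - 1) * (P/Q) + 1 = (((Real.sqrt 3:ℂ) - 1)*P + Q)/Q := by
      field_simp
    have h2 : -(P/Q) + (Real.sqrt 3:ℂ) + 1 = (-P + ((Real.sqrt 3:ℂ)+1)*Q)/Q := by
      field_simp; ring
    rw [h1, h2, ddd _ _ _ hQ]
    rw [show ((Real.sqrt 3:ℂ) - 1) * P + Q
        = (Real.sqrt 3 :ℂ) * ((((Real.sqrt 3:ℂ) - ((n:ℂ)+1)) * w + ((n:ℂ)+1))) by
        rw [hP, hQdef]; ring,
      show -P + ((Real.sqrt 3:ℂ) + 1) * Q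
        = (Real.sqrt 3 :ℂ) * ((-((n:ℂ)+1) * w + (Real.sqrt 3:ℂ) + ((n:ℂ)+1))) by
        rw [hP, hQdef]; ring]
    rw [mul_div_mul_left _ _ s3ne]
    push_cast
    ring_nf

lemma sR1 : 1 ≤ Real.sqrt 3 := by
  rw [show (1:ℝ) = Real.sqrt 1 by simp]
  exact Real.sqrt_le_sqrt (by norm_num)

lemma sR2 : Real.sqrt 3 ≤ 2 := by
  rw [show (2:ℝ) = Real.sqrt 4 by rw [show (4:ℝ) = 2^2 by norm_num, Real.sqrt_sq]; norm_num]
  exact Real.sqrt_le_sqrt (by norm_num)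

lemma sRsq : Real.sqrt 3 ^ 2 = 3 := Real.sq_sqrt (by norm_num)

lemma den1_abs (z : ℂ) (hz : ‖z‖ ≤ 1) :
    Real.sqrt 3 ≤ ‖-z + Real.sqrt 3 + 1‖ := by
  have h1 : ‖(Real.sqrt 3 : ℂ) + 1‖ = Real.sqrt 3 + 1 := by
    rw [show ((Real.sqrt 3 : ℂ) + 1) = ((Real.sqrt 3 + 1 : ℝ) : ℂ) by push_cast; ring,
      Complex.norm_real, Real.norm_eq_abs, _root_.abs_of_nonneg (by linarith [sR1])]
  have h2 : ‖(Real.sqrt 3:ℂ) + 1‖ - ‖z‖ ≤ ‖-z + Real.sqrt 3 + 1‖ := by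
    rw [show -z + (Real.sqrt 3:ℂ) + 1 = ((Real.sqrt 3:ℂ) + 1) - z by ring]
    exact norm_sub_norm_le ((Real.sqrt 3:ℂ) + 1) z
  rw [h1] at h2
  linarith

lemma den1_ne (z : ℂ) (hz : ‖z‖ ≤ 1) : (-z + (Real.sqrt 3:ℂ) + 1) ≠ 0 := by
  intro h
  have := den1_abs z hz
  rw [h] at this
  simp at this
  linarith [sR1]

lemma mapsDisk (z : ℂ) (hz : ‖z‖ ≤ 1) : ‖apollonianF z‖ ≤ 1 := by
  rw [apollonianF, norm_div, div_le_one (lt_of_lt_of_le (by linarith [sR1]) (den1_abs z hz))]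
  have hsq : Complex.normSq z ≤ 1 := by
    rw [← Complex.sq_norm]; nlinarith [norm_nonneg z]
  have hnorm : Complex.normSq (((Real.sqrt 3:ℂ) - 1) * z + 1)
      ≤ Complex.normSq (-z + Real.sqrt 3 + 1) := by
    rw [Complex.normSq_apply, Complex.normSq_apply]
    rw [Complex.normSq_apply] at hsq
    set x := z.re
    set y := z.im
    have hre1 : (((Real.sqrt 3:ℂ) - 1) * z + 1).re = (Real.sqrt 3 - 1) * x + 1 := by
      simp [Complex.add_re, Complex.mul_re, Complex.sub_re, Complex.sub_im]
      exact Or.inl rfl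
    have him1 : (((Real.sqrt 3:ℂ) - 1) * z + 1).im = (Real.sqrt 3 - 1) * y := by
      simp [Complex.add_im, Complex.mul_im, Complex.sub_re, Complex.sub_im]
      exact Or.inl rfl
    have hre2 : (-z + (Real.sqrt 3:ℂ) + 1).re = -x + Real.sqrt 3 + 1 := by simp; rfl
    have him2 : (-z + (Real.sqrt 3:ℂ) + 1).im = -y := by simp; rfl
    rw [hre1, him1, hre2, him2]
    nlinarith [mul_nonneg (by linarith [sR1] : (0:ℝ) ≤ Real.sqrt 3) (sq_nonneg (x - 1)),
      mul_nonneg (by linarith [sR1] : (0:ℝ) ≤ Real.sqrt 3) (sq_nonneg y), sRsq, hsq]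
  calc ‖((Real.sqrt 3:ℂ) - 1) * z + 1‖
      = Real.sqrt (Complex.normSq (((Real.sqrt 3:ℂ) - 1) * z + 1)) := Complex.norm_def _
    _ ≤ Real.sqrt (Complex.normSq (-z + Real.sqrt 3 + 1)) := Real.sqrt_le_sqrt hnorm
    _ = ‖-z + Real.sqrt 3 + 1‖ := (Complex.norm_def _).symm

lemma hasDerivAt_apF (z : ℂ) (hden : (-z + (Real.sqrt 3:ℂ) + 1) ≠ 0) :
    HasDerivAt apollonianF (3 / (-z + (Real.sqrt 3:ℂ) + 1)^2) z := by
  have h1 : HasDerivAt (fun z : ℂ => ((Real.sqrt 3:ℂ) - 1) * z + 1) ((Real.sqrt 3:ℂ) - 1) z := by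
    simpa using ((hasDerivAt_id z).const_mul ((Real.sqrt 3:ℂ) - 1)).add_const 1
  have h2 : HasDerivAt (fun z : ℂ => -z + (Real.sqrt 3:ℂ) + 1) (-1) z := by
    simpa using (((hasDerivAt_id z).neg).add_const ((Real.sqrt 3:ℂ))).add_const 1
  have := h1.div h2 hden
  refine this.congr_deriv ?_
  congr 1
  linear_combination s3c

lemma hasDerivAt_apg (n : ℕ) (w : ℂ) (hden : (-(n:ℂ) * w + (Real.sqrt 3:ℂ) + n) ≠ 0) :
    HasDerivAt (apg n) (3 / (-(n:ℂ) * w + (Real.sqrt 3:ℂ) + n)^2) w := by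
  have h1 : HasDerivAt (fun w : ℂ => ((Real.sqrt 3:ℂ) - n) * w + n) ((Real.sqrt 3:ℂ) - n) w := by
    simpa using ((hasDerivAt_id w).const_mul ((Real.sqrt 3:ℂ) - n)).add_const (n:ℂ)
  have h2 : HasDerivAt (fun w : ℂ => -(n:ℂ) * w + (Real.sqrt 3:ℂ) + n) (-(n:ℂ)) w := by
    simpa using (((hasDerivAt_id w).const_mul (-(n:ℂ))).add_const ((Real.sqrt 3:ℂ))).add_const (n:ℂ)
  have := h1.div h2 hden
  refine this.congr_deriv ?_
  congr 1
  linear_combination s3c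

lemma mvt_step (q x : ℝ) (hq : 1 < q) (hx : 1 ≤ x) :
    (q - 1) * (x + 1) ^ (-q) ≤ x ^ (1 - q) - (x + 1) ^ (1 - q) := by
  have hx0 : 0 < x := by linarith
  obtain ⟨c, hc, hslope⟩ := exists_hasDerivAt_eq_slope (fun y => y ^ (1 - q))
      (fun y => (1 - q) * y ^ (-q)) (by linarith : x < x + 1)
      (by
        apply ContinuousOn.rpow_const continuousOn_id
        intro y hy
        rw [Set.mem_Icc] at hy
        exact Or.inl (ne_of_gt (by linarith [hy.1] : (0:ℝ) < y)))
      (fun y hy => by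
        rw [Set.mem_Ioo] at hy
        have := Real.hasDerivAt_rpow_const (p := 1 - q)
          (Or.inl (ne_of_gt (by linarith [hy.1] : (0:ℝ) < y)))
        simpa [show (1:ℝ) - q - 1 = -q by ring] using this)
  rw [Set.mem_Ioo] at hc
  have hc0 : 0 < c := by linarith [hc.1]
  have hle : (x + 1) ^ (-q) ≤ c ^ (-q) :=
    Real.rpow_le_rpow_of_nonpos hc0 (le_of_lt hc.2) (by linarith)
  have : (1 - q) * c ^ (-q) = (x + 1) ^ (1 - q) - x ^ (1 - q) := by
    rw [hslope]; ring
  nlinarith [this, hle]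

open Filter Topology in
def tailEquiv (N : ℕ) : ℕ ≃ {m : ℕ // N + 1 ≤ m} where
  toFun k := ⟨N + 1 + k, by omega⟩
  invFun m := m.1 - (N + 1)
  left_inv k := by show N + 1 + k - (N + 1) = k; omega
  right_inv m := Subtype.ext (show N + 1 + (m.1 - (N + 1)) = m.1 by have := m.2; omega)

open Filter Topology in
lemma tail_hasSum (q : ℝ) (hq : 1 < q) (N : ℕ) (hN : 1 ≤ N) :
    Summable (fun n : {m : ℕ // N + 1 ≤ m} => ((n : ℕ) : ℝ) ^ (-q)) ∧
    ∑' n : {m : ℕ // N + 1 ≤ m}, ((n : ℕ) : ℝ) ^ (-q) ≤ (N : ℝ) ^ (1 - q) / (q - 1) := by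
  set b : ℕ → ℝ := fun k => ((N : ℝ) + k) ^ (1 - q) with hb
  set g : ℕ → ℝ := fun k => (((N : ℝ) + 1 + k)) ^ (-q) with hg
  have hq1 : (0:ℝ) < q - 1 := by linarith
  have htel : HasSum (fun k => (b k - b (k + 1)) / (q - 1)) (b 0 / (q - 1)) := by
    have h0 : Tendsto b atTop (nhds 0) := by
      have h1 : Tendsto (fun x : ℝ => x ^ (-(q-1))) atTop (nhds 0) :=
        tendsto_rpow_neg_atTop hq1
      have h2 : Tendsto (fun k : ℕ => (N : ℝ) + k) atTop atTop :=
        tendsto_atTop_add_const_left _ _ tendsto_natCast_atTop_atTop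
      have := h1.comp h2
      simpa [hb, Function.comp_def, show -(q-1) = 1 - q by ring] using this
    have hmono : ∀ k, b (k+1) ≤ b k := by
      intro k
      apply Real.rpow_le_rpow_of_nonpos
      · positivity
      · push_cast; linarith
      · linarith
    have : HasSum (fun k => b k - b (k + 1)) (b 0) := by
      rw [hasSum_iff_tendsto_nat_of_nonneg (fun k => by linarith [hmono k])]
      have hh : ∀ n : ℕ, ∑ i ∈ Finset.range n, (b i - b (i+1)) = b 0 - b n := by
        intro n; exact Finset.sum_range_sub' b n
      simp only [hh]
      simpa using (tendsto_const_nhds.sub h0)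
    exact this.div_const _
  have hterm : ∀ k : ℕ, g k ≤ (b k - b (k + 1)) / (q - 1) := by
    intro k
    have hN1 : (1:ℝ) ≤ (N : ℝ) := by exact_mod_cast hN
    have hk0 : (0:ℝ) ≤ (k : ℝ) := Nat.cast_nonneg k
    have hx : (1:ℝ) ≤ (N : ℝ) + k := by linarith
    have key := mvt_step q ((N:ℝ) + k) hq hx
    rw [le_div_iff₀ hq1]
    simp only [hg, hb]
    push_cast
    ring_nf at key ⊢
    try linarith [key]
  have hgnn : ∀ k, 0 ≤ g k := fun k => Real.rpow_nonneg (by positivity) _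
  have hsumg : Summable g := Summable.of_nonneg_of_le hgnn hterm htel.summable
  have htsumg : ∑' k, g k ≤ b 0 / (q - 1) := by
    calc ∑' k, g k ≤ ∑' k, (b k - b (k+1)) / (q - 1) := Summable.tsum_le_tsum hterm hsumg htel.summable
    _ = b 0 / (q - 1) := htel.tsum_eq
  have hpt : ∀ c : ℕ, (((tailEquiv N c : ℕ) : ℝ)) ^ (-q) = g c := by
    intro c
    have : ((tailEquiv N c : ℕ) : ℝ) = (N : ℝ) + 1 + c := by
      show ((N + 1 + c : ℕ) : ℝ) = (N : ℝ) + 1 + c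
      push_cast; ring
    rw [this, hg]
  have hb0 : b 0 = (N:ℝ) ^ (1 - q) := by rw [hb]; norm_num
  have hsum2 : Summable (fun n : {m : ℕ // N + 1 ≤ m} => ((n : ℕ) : ℝ) ^ (-q)) := by
    rw [← Equiv.summable_iff (tailEquiv N)]
    exact Summable.congr hsumg (fun c => (hpt c).symm)
  refine ⟨hsum2, ?_⟩
  rw [← Equiv.tsum_eq (tailEquiv N) (fun n : {m : ℕ // N + 1 ≤ m} => ((n : ℕ) : ℝ) ^ (-q)),
    tsum_congr hpt, ← hb0]
  exact htsumg

lemma cos_theta (k : ℕ) : Real.cos (apollonianTheta k) = -(1/2) := by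
  rw [apollonianTheta]
  have h : Real.cos (2 * Real.pi / 3) = -(1/2) := by
    rw [show 2 * Real.pi / 3 = Real.pi - Real.pi/3 by ring, Real.cos_pi_sub,
      Real.cos_pi_div_three]
  rcases Nat.even_or_odd k with hk | hk
  · rw [hk.neg_one_pow, one_mul, h]
  · rw [hk.neg_one_pow, neg_one_mul, Real.cos_neg, h]

lemma abs_s_add_nat (m : ℕ) : ‖(Real.sqrt 3:ℂ) + m‖ = Real.sqrt 3 + m := by
  rw [show (Real.sqrt 3:ℂ) + m = ((Real.sqrt 3 + m : ℝ) : ℂ) by push_cast; ring,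
    Complex.norm_real, Real.norm_eq_abs, _root_.abs_of_nonneg (by positivity)]

lemma derivPhi_bound (k n : ℕ) (hn : 1 ≤ n) (z : ℂ) (hz : ‖z‖ ≤ 1) :
    ‖deriv (apollonianPhi k n) z‖ ≤ 4 / (n:ℝ)^2 := by
  have hsR1 := sR1
  have hsR2 := sR2
  have hsRsq := sRsq
  set s : ℂ := ((Real.sqrt 3 : ℝ) : ℂ) with hs
  set e : ℂ := Complex.exp ((apollonianTheta k : ℂ) * I) with he
  set e' : ℂ := Complex.exp ((apollonianTheta' k : ℂ) * I) with he'
  have habse : ‖e‖ = 1 := Complex.norm_exp_ofReal_mul_I _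
  have habse' : ‖e'‖ = 1 := Complex.norm_exp_ofReal_mul_I _
  have hden : (-z + s + 1) ≠ 0 := den1_ne z hz
  have hfd : HasDerivAt apollonianF (3 / (-z + s + 1)^2) z := hasDerivAt_apF z hden
  set w : ℂ := e * apollonianF z with hw
  have habsw : ‖w‖ ≤ 1 := by
    rw [hw, norm_mul, habse, one_mul]; exact mapsDisk z hz
  have hQ : ∀ m : ℕ, (-(m:ℂ) * w + s + m) ≠ 0 := by
    intro m h0
    have h2 : s + (m:ℂ) = (m:ℂ) * w := by linear_combination h0
    have h3 := congrArg (norm : ℂ → ℝ) h2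
    rw [abs_s_add_nat, norm_mul, Complex.norm_natCast] at h3
    have h4 : (m:ℝ) * ‖w‖ ≤ (m:ℝ) * 1 :=
      mul_le_mul_of_nonneg_left habsw (Nat.cast_nonneg m)
    rw [← h3] at h4
    linarith
  -- eventual equality with the rational model
  have hU : apollonianPhi k n =ᶠ[nhds z] (fun z' => e' * apg n (e * apollonianF z')) := by
    have hcont : ContinuousAt (fun z' => e * apollonianF z') z :=
      continuousAt_const.mul hfd.continuousAt
    have hopen : IsOpen {u : ℂ | ∀ m ∈ Finset.range n, (-(m:ℂ) * u + s + m) ≠ 0} := by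
      have hEq : {u : ℂ | ∀ m ∈ Finset.range n, (-(m:ℂ) * u + s + m) ≠ 0}
          = ⋂ m ∈ Finset.range n, ((fun u => -(m:ℂ) * u + s + m) ⁻¹' {(0:ℂ)}ᶜ) := by
        ext u; simp [Set.mem_iInter]
      rw [hEq]
      exact isOpen_biInter_finset (fun m _ =>
        IsOpen.preimage (by fun_prop) isOpen_compl_singleton)
    have hmem : (fun z' => e * apollonianF z') z ∈
        {u : ℂ | ∀ m ∈ Finset.range n, (-(m:ℂ) * u + s + m) ≠ 0} :=
      fun m _ => hQ m
    filter_upwards [hcont.preimage_mem_nhds (hopen.mem_nhds hmem)] with z' hz'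
    show apollonianPhi k n z' = e' * apg n (e * apollonianF z')
    rw [apollonianPhi, rot, rot,
      iterEq n _ (fun m hm => hz' m (Finset.mem_range.mpr hm))]
  have hQn : (-(n:ℂ) * w + s + n) ≠ 0 := hQ n
  have hgd : HasDerivAt (apg n) (3 / (-(n:ℂ) * w + s + n)^2) w := hasDerivAt_apg n w hQn
  have hcomp : HasDerivAt (fun z' => e' * apg n (e * apollonianF z'))
      (e' * (3 / (-(n:ℂ) * w + s + n)^2 * (e * (3 / (-z + s + 1)^2)))) z :=
    by have := ((hgd.comp z (hfd.const_mul e)).const_mul e'); exact this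
  have hderiv : deriv (apollonianPhi k n) z
      = e' * (3 / (-(n:ℂ) * w + s + n)^2 * (e * (3 / (-z + s + 1)^2))) :=
    (hcomp.congr_of_eventuallyEq hU).deriv
  -- the combined denominator
  set E : ℂ := -(n:ℂ) * e * ((s - 1) * z + 1) + (s + n) * (-z + s + 1) with hE
  have hprod : (-(n:ℂ) * w + s + n) * (-z + s + 1) = E := by
    rw [hE, hw, apollonianF]
    push_cast [← hs]
    field_simp
    ring
  -- lower bound on |E|
  have hEbound : (3/2 : ℝ) * n ≤ ‖E‖ := by
    set c : ℂ := -(n:ℂ) * e * (s - 1) - (s + n) with hc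
    set d : ℂ := -(n:ℂ) * e + (s + n) * (s + 1) with hd
    have hcd : E = c * z + d := by rw [hE, hc, hd]; ring
    have h1 : ‖d‖ - ‖c * z‖ ≤ ‖E‖ := by
      rw [hcd]
      calc ‖d‖ - ‖c * z‖
          = ‖d‖ - ‖-(c*z)‖ := by rw [norm_neg]
        _ ≤ ‖d - (-(c*z))‖ := norm_sub_norm_le _ _
        _ = ‖c * z + d‖ := by rw [sub_neg_eq_add, add_comm]
    have hred : d.re = (n:ℝ) * (1/2) + (Real.sqrt 3 + n) * (Real.sqrt 3 + 1) := by
      rw [hd]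
      have h5 : ((s + n) * (s + 1)) = (((Real.sqrt 3 + n) * (Real.sqrt 3 + 1) : ℝ) : ℂ) := by
        rw [hs]; push_cast; ring
      rw [Complex.add_re, h5, Complex.ofReal_re]
      have h6 : (-(n:ℂ) * e).re = -(n:ℝ) * Real.cos (apollonianTheta k) := by
        rw [show -(n:ℂ) * e = ((-(n:ℝ) : ℝ) : ℂ) * e by push_cast; ring,
          Complex.re_ofReal_mul, he, Complex.exp_ofReal_mul_I_re]
      rw [h6, cos_theta]
      ring
    have hdre : d.re ≤ ‖d‖ := Complex.re_le_norm d
    have hcabs : ‖c‖ ≤ (n:ℝ) * (Real.sqrt 3 - 1) + (Real.sqrt 3 + n) := by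
      rw [hc]
      calc ‖-(n:ℂ) * e * (s - 1) - (s + n)‖
          ≤ ‖-(n:ℂ) * e * (s - 1)‖ + ‖s + n‖ := by
            exact norm_sub_le (-(n:ℂ) * e * (s - 1)) (s + n)
        _ = (n:ℝ) * (Real.sqrt 3 - 1) + (Real.sqrt 3 + n) := by
            rw [abs_s_add_nat, norm_mul, norm_mul, norm_neg, Complex.norm_natCast, habse,
              show s - 1 = ((Real.sqrt 3 - 1 : ℝ) : ℂ) by rw [hs]; push_cast; ring,
              Complex.norm_real, Real.norm_eq_abs, _root_.abs_of_nonneg (by linarith)]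
            ring
    have hcz : ‖c * z‖ ≤ ‖c‖ := by
      rw [norm_mul]
      calc ‖c‖ * ‖z‖ ≤ ‖c‖ * 1 :=
            mul_le_mul_of_nonneg_left hz (norm_nonneg _)
        _ = ‖c‖ := mul_one _
    have hn0 : (0:ℝ) ≤ (n:ℝ) := Nat.cast_nonneg n
    nlinarith [h1, hdre, hcabs, hcz]
  -- final computation
  rw [hderiv]
  have haQ : 0 < ‖-(n:ℂ) * w + s + n‖ := norm_pos_iff.mpr hQn
  have haD : 0 < ‖-z + s + 1‖ := norm_pos_iff.mpr hden
  have habsEq : ‖-(n:ℂ) * w + s + n‖ * ‖-z + s + 1‖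
      = ‖E‖ := by rw [← norm_mul, hprod]
  have hn0 : (0:ℝ) < (n:ℝ) := by exact_mod_cast hn
  rw [norm_mul, norm_mul, norm_mul, norm_div, norm_div, habse, habse', norm_pow, norm_pow]
  have h3 : ‖(3:ℂ)‖ = 3 := by simp
  rw [h3, one_mul, one_mul]
  set aQ := ‖-(n:ℂ) * w + s + n‖
  set aD := ‖-z + s + 1‖
  have hkey : (3/2 : ℝ) * n ≤ aQ * aD := by rw [habsEq]; exact hEbound
  have hrw : 3 / aQ^2 * (3 / aD^2) = 9 / (aQ * aD)^2 := by
    field_simp; ring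
  rw [hrw, div_le_div_iff₀ (by positivity) (by positivity)]
  nlinarith [hkey, hn0, mul_pos haQ haD]

/-- Tail bound for the Apollonian gasket: for `t > 1/2` and `N ≥ 1`,
`∑_{k=1}^{6} ∑_{n=N+1}^{∞} (sup_{|z| ≤ 1} |φ_{k,n}′(z)|)^t ≤ 6 · 4^t · N^{1−2t}/(2t−1)`. -/
theorem apollonian_tail_bound (t : ℝ) (ht : 1/2 < t) (N : ℕ) (hN : 1 ≤ N) :
    ∑ k ∈ Finset.Icc 1 6, ∑' n : {m : ℕ // N + 1 ≤ m},
        (⨆ z : Metric.closedBall (0 : ℂ) 1,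
            ‖deriv (apollonianPhi k n.1) z.1‖) ^ t ≤
      6 * (4 : ℝ) ^ t * (N : ℝ) ^ (1 - 2 * t) / (2 * t - 1) := by
  haveI : Nonempty (Metric.closedBall (0:ℂ) 1) :=
    ⟨⟨0, Metric.mem_closedBall_self (by norm_num)⟩⟩
  have ht0 : (0:ℝ) ≤ t := by linarith
  have hq : (1:ℝ) < 2 * t := by linarith
  obtain ⟨hsum_tail, htail⟩ := tail_hasSum (2*t) hq N hN
  have h12t : 1 - 2*t = -(2*t) + 1 := by ring
  -- pointwise bound on the sup, for every k and n in the tail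
  have hsup : ∀ k : ℕ, ∀ n : {m : ℕ // N + 1 ≤ m},
      (⨆ z : Metric.closedBall (0 : ℂ) 1,
        ‖deriv (apollonianPhi k n.1) z.1‖) ^ t
      ≤ (4:ℝ) ^ t * ((n:ℕ):ℝ) ^ (-(2*t)) := by
    intro k n
    have hn1 : 1 ≤ (n : ℕ) := le_trans (by omega) n.2
    have hn0 : (0:ℝ) < ((n:ℕ):ℝ) := by exact_mod_cast hn1
    have hb : ∀ z : Metric.closedBall (0:ℂ) 1,
        ‖deriv (apollonianPhi k n.1) z.1‖ ≤ 4 / ((n:ℕ):ℝ)^2 := by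
      intro z
      refine derivPhi_bound k n.1 hn1 z.1 ?_
      have := z.2
      rwa [Metric.mem_closedBall, Complex.dist_eq, sub_zero] at this
    have hsup_le : (⨆ z : Metric.closedBall (0 : ℂ) 1,
        ‖deriv (apollonianPhi k n.1) z.1‖) ≤ 4 / ((n:ℕ):ℝ)^2 := ciSup_le hb
    have hsup_nn : 0 ≤ ⨆ z : Metric.closedBall (0 : ℂ) 1,
        ‖deriv (apollonianPhi k n.1) z.1‖ :=
      Real.iSup_nonneg (fun z => norm_nonneg _)
    calc (⨆ z : Metric.closedBall (0 : ℂ) 1,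
          ‖deriv (apollonianPhi k n.1) z.1‖) ^ t
        ≤ (4 / ((n:ℕ):ℝ)^2) ^ t := Real.rpow_le_rpow hsup_nn hsup_le ht0
      _ = (4:ℝ) ^ t * ((n:ℕ):ℝ) ^ (-(2*t)) := by
          rw [Real.div_rpow (by norm_num) (by positivity),
            ← Real.rpow_natCast ((n:ℕ):ℝ) 2, ← Real.rpow_mul (le_of_lt hn0),
            Real.rpow_neg (le_of_lt hn0), div_eq_mul_inv]
          norm_num
  have hsupnn : ∀ k : ℕ, ∀ n : {m : ℕ // N + 1 ≤ m},
      0 ≤ (⨆ z : Metric.closedBall (0 : ℂ) 1,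
        ‖deriv (apollonianPhi k n.1) z.1‖) ^ t := by
    intro k n
    exact Real.rpow_nonneg (Real.iSup_nonneg (fun z => norm_nonneg _)) t
  have hsumbound : Summable (fun n : {m : ℕ // N + 1 ≤ m} =>
      (4:ℝ) ^ t * ((n:ℕ):ℝ) ^ (-(2*t))) := hsum_tail.mul_left _
  have hk : ∀ k : ℕ, ∑' n : {m : ℕ // N + 1 ≤ m},
      (⨆ z : Metric.closedBall (0 : ℂ) 1,
        ‖deriv (apollonianPhi k n.1) z.1‖) ^ t
      ≤ (4:ℝ) ^ t * ((N:ℝ) ^ (1 - 2*t) / (2*t - 1)) := by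
    intro k
    have hsummand : Summable (fun n : {m : ℕ // N + 1 ≤ m} =>
        (⨆ z : Metric.closedBall (0 : ℂ) 1,
          ‖deriv (apollonianPhi k n.1) z.1‖) ^ t) :=
      Summable.of_nonneg_of_le (hsupnn k) (hsup k) hsumbound
    calc ∑' n : {m : ℕ // N + 1 ≤ m},
        (⨆ z : Metric.closedBall (0 : ℂ) 1,
          ‖deriv (apollonianPhi k n.1) z.1‖) ^ t
        ≤ ∑' n : {m : ℕ // N + 1 ≤ m}, (4:ℝ) ^ t * ((n:ℕ):ℝ) ^ (-(2*t)) :=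
          Summable.tsum_le_tsum (hsup k) hsummand hsumbound
      _ = (4:ℝ) ^ t * ∑' n : {m : ℕ // N + 1 ≤ m}, ((n:ℕ):ℝ) ^ (-(2*t)) := tsum_mul_left
      _ ≤ (4:ℝ) ^ t * ((N:ℝ) ^ (1 - 2*t) / (2*t - 1)) := by
          apply mul_le_mul_of_nonneg_left _ (Real.rpow_nonneg (by norm_num) t)
          exact htail
  calc ∑ k ∈ Finset.Icc 1 6, ∑' n : {m : ℕ // N + 1 ≤ m},
      (⨆ z : Metric.closedBall (0 : ℂ) 1,
        ‖deriv (apollonianPhi k n.1) z.1‖) ^ t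
      ≤ ∑ k ∈ Finset.Icc 1 6, (4:ℝ) ^ t * ((N:ℝ) ^ (1 - 2*t) / (2*t - 1)) :=
        Finset.sum_le_sum (fun k _ => hk k)
    _ = 6 * (4 : ℝ) ^ t * (N : ℝ) ^ (1 - 2 * t) / (2 * t - 1) := by
        rw [Finset.sum_const]
        simp [Nat.card_Icc]
        ring
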